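/- Every ring of finite weak dimension is left GF-closed; that is, if R is a ring with wdim(R) ≤ n for some nonnegative integer n, then for every short exact sequence of left R-modules 0 → A → B → C → 0 with A and C Gorenstein flat, B is Gorenstein flat. -/

import Mathlib

open TensorProduct
universe u
section RTensor
variable (R : Type u) [Ring R]
def trel (A : Type u) [AddCommGroup A] [Module Rᵐᵒᵖ A]
    (B : Type u) [AddCommGroup B] [Module R B] : Submodule ℤ (TensorProduct ℤ A B) :=
  Submodule.span ℤ { z | ∃ (r : R) (a : A) (b : B),
    z = (MulOpposite.op r • a) ⊗ₜ[ℤ] b - a ⊗ₜ[ℤ] (r • b) }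
def RTensor (A : Type u) [AddCommGroup A] [Module Rᵐᵒᵖ A]
    (B : Type u) [AddCommGroup B] [Module R B] : Type u :=
  TensorProduct ℤ A B ⧸ trel R A B
noncomputable instance (A : Type u) [AddCommGroup A] [Module Rᵐᵒᵖ A]
    (B : Type u) [AddCommGroup B] [Module R B] : AddCommGroup (RTensor R A B) := by
  unfold RTensor; infer_instance
noncomputable instance (A : Type u) [AddCommGroup A] [Module Rᵐᵒᵖ A]
    (B : Type u) [AddCommGroup B] [Module R B] : Module ℤ (RTensor R A B) := by
  unfold RTensor; infer_instance
variable {A A' : Type u} [AddCommGroup A] [Module Rᵐᵒᵖ A] [AddCommGroup A'] [Module Rᵐᵒᵖ A']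
variable {B B' : Type u} [AddCommGroup B] [Module R B] [AddCommGroup B'] [Module R B']
noncomputable def RTensor.map (A : Type u) [AddCommGroup A] [Module Rᵐᵒᵖ A]
    (f : B →ₗ[R] B') : RTensor R A B →ₗ[ℤ] RTensor R A B' :=
  Submodule.mapQ (trel R A B) (trel R A B')
    (TensorProduct.map LinearMap.id f.toAddMonoidHom.toIntLinearMap)
    (by
      rw [trel, Submodule.span_le]
      rintro z ⟨r, a, b, rfl⟩
      simp only [SetLike.mem_coe, Submodule.mem_comap, map_sub, TensorProduct.map_tmul,
        LinearMap.id_coe, id_eq, AddMonoidHom.coe_toIntLinearMap, LinearMap.toAddMonoidHom_coe,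
        LinearMap.map_smul]
      exact Submodule.subset_span ⟨r, a, f b, by erw [map_sub, TensorProduct.map_tmul, TensorProduct.map_tmul]; simp⟩)
noncomputable def RTensor.lmap (g : A →ₗ[Rᵐᵒᵖ] A')
    (B : Type u) [AddCommGroup B] [Module R B] : RTensor R A B →ₗ[ℤ] RTensor R A' B :=
  Submodule.mapQ (trel R A B) (trel R A' B)
    (TensorProduct.map g.toAddMonoidHom.toIntLinearMap LinearMap.id)
    (by
      rw [trel, Submodule.span_le]
      rintro z ⟨r, a, b, rfl⟩
      simp only [SetLike.mem_coe, Submodule.mem_comap, map_sub, TensorProduct.map_tmul,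
        LinearMap.id_coe, id_eq, AddMonoidHom.coe_toIntLinearMap, LinearMap.toAddMonoidHom_coe,
        LinearMap.map_smul]
      exact Submodule.subset_span ⟨r, g a, b, by erw [map_sub, TensorProduct.map_tmul, TensorProduct.map_tmul]; simp⟩)
end RTensor

/-- A left `R`-module `B` is flat if tensoring with it preserves injectivity
of maps of right `R`-modules. -/
def FlatModule (R : Type u) [Ring R] (B : Type u) [AddCommGroup B] [Module R B] : Prop :=
  ∀ (A A' : Type u) [AddCommGroup A] [Module Rᵐᵒᵖ A] [AddCommGroup A'] [Module Rᵐᵒᵖ A']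
    (g : A →ₗ[Rᵐᵒᵖ] A'), Function.Injective g → Function.Injective (RTensor.lmap R g B)

/-- A witness that `M` is a Gorenstein flat left `R`-module: a doubly infinite exact
sequence of flat left `R`-modules `⋯ → F (-1) → F 0 → F 1 → ⋯` with
`M ≅ Im (F 0 → F 1)`, which stays exact after applying `I ⊗_R −` for every
injective right `R`-module `I`. -/
structure GorensteinFlatWitness (R : Type u) [Ring R]
    (M : Type u) [AddCommGroup M] [Module R M] where
  F : ℤ → Type u
  [acg : ∀ i, AddCommGroup (F i)]
  [mod : ∀ i, Module R (F i)]
  d : ∀ i, F i →ₗ[R] F (i + 1)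
  flat : ∀ i, FlatModule R (F i)
  exact : ∀ i, Function.Exact (d i) (d (i + 1))
  iso : M ≃ₗ[R] LinearMap.range (d 0)
  tensorExact : ∀ (I : Type u) [AddCommGroup I] [Module Rᵐᵒᵖ I], Module.Injective Rᵐᵒᵖ I →
    ∀ i, Function.Exact (RTensor.map R I (d i)) (RTensor.map R I (d (i + 1)))

/-- A left `R`-module is Gorenstein flat if it admits a Gorenstein flat witness. -/
def IsGorensteinFlat (R : Type u) [Ring R]
    (M : Type u) [AddCommGroup M] [Module R M] : Prop :=
  Nonempty (GorensteinFlatWitness R M)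

/-- `0 → A → B → C → 0` is a short exact sequence. -/
def IsShortExact {R : Type u} [Ring R] {A B C : Type u}
    [AddCommGroup A] [Module R A] [AddCommGroup B] [Module R B] [AddCommGroup C] [Module R C]
    (f : A →ₗ[R] B) (g : B →ₗ[R] C) : Prop :=
  Function.Injective f ∧ Function.Exact f g ∧ Function.Surjective g

/-- A ring `R` is left GF-closed if the class of Gorenstein flat left `R`-modules is
closed under extensions. -/
def LeftGFClosed (R : Type u) [Ring R] : Prop :=
  ∀ (A B C : Type u) [AddCommGroup A] [Module R A] [AddCommGroup B] [Module R B]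
    [AddCommGroup C] [Module R C] (f : A →ₗ[R] B) (g : B →ₗ[R] C),
    IsShortExact f g → IsGorensteinFlat R A → IsGorensteinFlat R C → IsGorensteinFlat R B

/-- An exact sequence `0 → G n → G (n-1) → ⋯ → G 0 → M → 0` of left `R`-modules,
encoded as an `ℕ`-indexed exact complex, vanishing in degrees `> n`, that augments to `M`. -/
structure ModResolution (R : Type u) [Ring R] (M : Type u) [AddCommGroup M] [Module R M]
    (n : ℕ) where
  G : ℕ → Type u
  [acg : ∀ i, AddCommGroup (G i)]
  [mod : ∀ i, Module R (G i)]
  d : ∀ i, G (i + 1) →ₗ[R] G i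
  aug : G 0 →ₗ[R] M
  surj : Function.Surjective aug
  exact0 : Function.Exact (d 0) aug
  exact : ∀ i, Function.Exact (d (i + 1)) (d i)
  zero : ∀ i > n, ∀ x : G i, x = 0

attribute [instance] ModResolution.acg ModResolution.mod

/-- `M` has Gorenstein flat dimension at most `n`: there is an exact sequence
`0 → G n → ⋯ → G 0 → M → 0` with every `G i` Gorenstein flat. -/
def GfdLE (R : Type u) [Ring R] (M : Type u) [AddCommGroup M] [Module R M] (n : ℕ) : Prop :=
  ∃ res : ModResolution R M n, ∀ i ≤ n, IsGorensteinFlat R (res.G i)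

/-- The Gorenstein flat dimension of `M`, in `ℕ∞`: the least length of a resolution of `M`
by Gorenstein flat modules, or `⊤` if there is none. -/
noncomputable def Gfd (R : Type u) [Ring R] (M : Type u) [AddCommGroup M] [Module R M] : ℕ∞ :=
  sInf {c : ℕ∞ | ∃ n : ℕ, c = n ∧ GfdLE R M n}

/-- `M` has flat dimension at most `n`: there is an exact sequence
`0 → G n → ⋯ → G 0 → M → 0` with every `G i` flat. -/
def FdLE (R : Type u) [Ring R] (M : Type u) [AddCommGroup M] [Module R M] (n : ℕ) : Prop :=
  ∃ res : ModResolution R M n, ∀ i ≤ n, FlatModule R (res.G i)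

/-- `wdim R ≤ n`: every (left or right) `R`-module has flat dimension at most `n`. -/
def WdimLE (R : Type u) [Ring R] (n : ℕ) : Prop :=
  (∀ (M : Type u) [AddCommGroup M] [Module R M], FdLE R M n) ∧
  (∀ (M : Type u) [AddCommGroup M] [Module Rᵐᵒᵖ M], FdLE Rᵐᵒᵖ M n)


/-! ### Infrastructure -/

section Dev
variable {R : Type u} [Ring R]
variable {A A' A'' : Type u} [AddCommGroup A] [Module Rᵐᵒᵖ A] [AddCommGroup A'']
variable [AddCommGroup A'] [Module Rᵐᵒᵖ A'] [Module Rᵐᵒᵖ A'']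
variable {B B' B'' : Type u} [AddCommGroup B] [Module R B] [AddCommGroup B'] [Module R B']
variable [AddCommGroup B''] [Module R B'']

/-- The canonical generator of `RTensor`. -/
noncomputable def RTensor.mk (R : Type u) [Ring R] {A B : Type u} [AddCommGroup A] [Module Rᵐᵒᵖ A]
    [AddCommGroup B] [Module R B] (a : A) (b : B) : RTensor R A B :=
  Submodule.Quotient.mk (a ⊗ₜ[ℤ] b)

@[elab_as_elim] lemma RTensor.induction_on {P : RTensor R A B → Prop} (x : RTensor R A B)
    (zero : P 0) (mk : ∀ a b, P (RTensor.mk R a b))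
    (add : ∀ x y, P x → P y → P (x + y)) : P x := by
  obtain ⟨y, rfl⟩ := Submodule.Quotient.mk_surjective _ x
  induction y using TensorProduct.induction_on with
  | zero => exact zero
  | tmul a b => exact mk a b
  | add x y hx hy =>
      have : (Submodule.Quotient.mk (x + y) : RTensor R A B)
          = Submodule.Quotient.mk x + Submodule.Quotient.mk y := rfl
      rw [this]; exact add _ _ hx hy

lemma RTensor.mk_rel (r : R) (a : A) (b : B) :
    RTensor.mk R (MulOpposite.op r • a) b = RTensor.mk R a (r • b) := by
  rw [RTensor.mk, RTensor.mk]
  exact (Submodule.Quotient.eq (trel R A B)).mpr (Submodule.subset_span ⟨r, a, b, rfl⟩)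

lemma RTensor.mk_add_left (a a' : A) (b : B) :
    RTensor.mk R (a + a') b = RTensor.mk R a b + RTensor.mk R a' b := by
  rw [RTensor.mk, RTensor.mk, RTensor.mk,
    TensorProduct.add_tmul]; rfl

lemma RTensor.mk_add_right (a : A) (b b' : B) :
    RTensor.mk R a (b + b') = RTensor.mk R a b + RTensor.mk R a b' := by
  rw [RTensor.mk, RTensor.mk, RTensor.mk,
    TensorProduct.tmul_add]; rfl

lemma RTensor.mk_zero_right (a : A) : RTensor.mk R a (0 : B) = 0 := by
  rw [RTensor.mk, TensorProduct.tmul_zero]; rfl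

lemma RTensor.map_mk (f : B →ₗ[R] B') (a : A) (b : B) :
    RTensor.map R A f (RTensor.mk R a b) = RTensor.mk R a (f b) := by
  rfl

lemma RTensor.lmap_mk (g : A →ₗ[Rᵐᵒᵖ] A'') (a : A) (b : B) :
    RTensor.lmap R g B (RTensor.mk R a b) = RTensor.mk R (g a) b := by
  rfl

lemma RTensor.map_id_apply (x : RTensor R A B) :
    RTensor.map R A (LinearMap.id : B →ₗ[R] B) x = x := by
  induction x using RTensor.induction_on with
  | zero => simp
  | mk a b => rw [RTensor.map_mk]; rfl
  | add x y hx hy => rw [map_add, hx, hy]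

lemma RTensor.map_zero_apply (x : RTensor R A B) :
    RTensor.map R A (0 : B →ₗ[R] B') x = 0 := by
  induction x using RTensor.induction_on with
  | zero => simp
  | mk a b => rw [RTensor.map_mk]; exact RTensor.mk_zero_right a
  | add x y hx hy => rw [map_add, hx, hy, add_zero]

/-! ### Character modules -/

/-- Right module structure on the character module of a left module. -/
noncomputable instance charRight {R : Type u} [Ring R] (B : Type u) [AddCommGroup B]
    [Module R B] : Module Rᵐᵒᵖ (CharacterModule B) where
  smul r c := c.comp (DistribMulAction.toAddMonoidHom B r.unop)
  one_smul c := by ext b; show c ((1 : R) • b) = c b; rw [one_smul]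
  mul_smul x y c := by
    ext b; show c (((x * y).unop) • b) = c (y.unop • x.unop • b)
    rw [MulOpposite.unop_mul, mul_smul]
  smul_zero r := by ext b; rfl
  smul_add r c c' := by ext b; rfl
  add_smul r s c := by
    ext b; show c ((r.unop + s.unop) • b) = c (r.unop • b) + c (s.unop • b)
    rw [add_smul, map_add]
  zero_smul c := by ext b; show c ((0 : R) • b) = 0; rw [zero_smul, map_zero]

lemma charRight_smul_apply {R : Type u} [Ring R] {B : Type u} [AddCommGroup B] [Module R B]
    (r : Rᵐᵒᵖ) (c : CharacterModule B) (b : B) : (r • c) b = c (r.unop • b) := rfl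

/-- Left module structure on the character module of a right module. -/
noncomputable instance charLeft {R : Type u} [Ring R] (A : Type u) [AddCommGroup A]
    [Module Rᵐᵒᵖ A] : Module R (CharacterModule A) where
  smul r c := c.comp (DistribMulAction.toAddMonoidHom A (MulOpposite.op r))
  one_smul c := by
    ext a; show c ((MulOpposite.op (1 : R)) • a) = c a
    rw [MulOpposite.op_one, one_smul]
  mul_smul x y c := by
    ext a; show c ((MulOpposite.op (x * y)) • a) = c (MulOpposite.op y • MulOpposite.op x • a)
    rw [MulOpposite.op_mul, mul_smul]
  smul_zero r := by ext a; rfl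
  smul_add r c c' := by ext a; rfl
  add_smul r s c := by
    ext a
    show c ((MulOpposite.op (r + s)) • a)
      = c (MulOpposite.op r • a) + c (MulOpposite.op s • a)
    rw [MulOpposite.op_add, add_smul, map_add]
  zero_smul c := by
    ext a; show c ((MulOpposite.op (0 : R)) • a) = 0
    rw [MulOpposite.op_zero, zero_smul, map_zero]

lemma charLeft_smul_apply {R : Type u} [Ring R] {A : Type u} [AddCommGroup A] [Module Rᵐᵒᵖ A]
    (r : R) (c : CharacterModule A) (a : A) : (r • c) a = c (MulOpposite.op r • a) := rfl

section CDual
variable {R : Type u} [Ring R]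
variable {B B' B'' : Type u} [AddCommGroup B] [Module R B] [AddCommGroup B'] [Module R B']
variable [AddCommGroup B''] [Module R B'']

/-- The dual of a map of left modules, as a map of right modules. -/
noncomputable def cdualR (f : B →ₗ[R] B') : CharacterModule B' →ₗ[Rᵐᵒᵖ] CharacterModule B where
  toFun c := c.comp f.toAddMonoidHom
  map_add' c c' := rfl
  map_smul' r c := by
    ext b
    show c (r.unop • f b) = c (f (r.unop • b))
    rw [LinearMap.map_smul]

lemma cdualR_apply (f : B →ₗ[R] B') (c : CharacterModule B') (b : B) :
    cdualR f c b = c (f b) := rfl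

lemma cdualR_injective_of_surjective {f : B →ₗ[R] B'} (hf : Function.Surjective f) :
    Function.Injective (cdualR f) := by
  intro c c' h
  ext b'
  obtain ⟨b, rfl⟩ := hf b'
  exact congrArg (fun c => c b) h

lemma cdualR_surjective_of_injective {f : B →ₗ[R] B'} (hf : Function.Injective f) :
    Function.Surjective (cdualR f) := by
  intro c
  obtain ⟨c', hc'⟩ := CharacterModule.dual_surjective_of_injective (R := ℤ)
    (f.toAddMonoidHom.toIntLinearMap) hf c
  exact ⟨c', by ext b; exact congrArg (fun c => c b) hc'⟩

lemma cdualR_exact {f : B →ₗ[R] B'} {g : B' →ₗ[R] B''} (h : Function.Exact f g) :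
    Function.Exact (cdualR g) (cdualR f) := by
  intro c
  constructor
  · intro hc
    -- `c` kills `ker g`, so it factors through `range g` and extends to `B''`.
    set gz : B' →ₗ[ℤ] B'' := g.toAddMonoidHom.toIntLinearMap with hgz
    have hker : LinearMap.ker gz ≤ LinearMap.ker (c.toIntLinearMap) := by
      intro y hy
      have : g y = 0 := hy
      obtain ⟨x, rfl⟩ := (h y).mp this
      exact congrArg (fun d => d x) hc
    set cbar := Submodule.liftQ (LinearMap.ker gz) c.toIntLinearMap hker
    set e := gz.quotKerEquivRange
    obtain ⟨ζ, hζ⟩ := CharacterModule.dual_surjective_of_injective (R := ℤ)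
      (Submodule.subtype (LinearMap.range gz)) (Submodule.injective_subtype _)
      (cbar.comp (e.symm : LinearMap.range gz →ₗ[ℤ] B' ⧸ LinearMap.ker gz)).toAddMonoidHom
    refine ⟨ζ, ?_⟩
    ext y
    have hmem : g y ∈ LinearMap.range gz := ⟨y, rfl⟩
    have h1 : ζ (g y) = cbar (e.symm ⟨g y, hmem⟩) :=
      congrArg (fun c => c ⟨g y, hmem⟩) hζ
    have h2 : e.symm ⟨g y, hmem⟩ = Submodule.Quotient.mk y := by
      rw [LinearEquiv.symm_apply_eq]
      exact Subtype.ext rfl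
    show ζ (g y) = c y
    rw [h1, h2]
    rfl
  · rintro ⟨ζ, rfl⟩
    ext b
    show ζ (g (f b)) = 0
    rw [h.apply_apply_eq_zero, map_zero]

lemma cdualR_shortExact {f : B →ₗ[R] B'} {g : B' →ₗ[R] B''} (h : IsShortExact f g) :
    IsShortExact (cdualR g : CharacterModule B'' →ₗ[Rᵐᵒᵖ] CharacterModule B')
      (cdualR f : CharacterModule B' →ₗ[Rᵐᵒᵖ] CharacterModule B) :=
  ⟨cdualR_injective_of_surjective h.2.2, cdualR_exact h.2.1,
    cdualR_surjective_of_injective h.1⟩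

/-- Dual of a linear equivalence of left modules. -/
noncomputable def cdualREquiv (e : B ≃ₗ[R] B') :
    CharacterModule B' ≃ₗ[Rᵐᵒᵖ] CharacterModule B :=
  LinearEquiv.ofLinear (cdualR e.toLinearMap) (cdualR e.symm.toLinearMap)
    (by ext c b; show c (e.symm (e b)) = c b; rw [LinearEquiv.symm_apply_apply])
    (by ext c b; show c (e (e.symm b)) = c b; rw [LinearEquiv.apply_symm_apply])

end CDual

/-! ### Injectivity predicate and the adjunction -/

/-- Concrete injectivity predicate for modules (within universe `u`). -/
def InjMod (S : Type u) [Ring S] (X : Type u) [AddCommGroup X] [Module S X] : Prop :=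
  ∀ (U V : Type u) [AddCommGroup U] [Module S U] [AddCommGroup V] [Module S V]
    (j : U →ₗ[S] V), Function.Injective j →
    ∀ φ : U →ₗ[S] X, ∃ ψ : V →ₗ[S] X, ψ ∘ₗ j = φ

section Adjunction
variable {R : Type u} [Ring R]
variable {A A' : Type u} [AddCommGroup A] [Module Rᵐᵒᵖ A] [AddCommGroup A'] [Module Rᵐᵒᵖ A']
variable {B : Type u} [AddCommGroup B] [Module R B]

/-- A bilinear pairing underlying the adjunction. -/
noncomputable def toCharAux (ψ : A →ₗ[Rᵐᵒᵖ] CharacterModule B) :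
    A →+ (B →ₗ[ℤ] AddCircle (1 : ℚ)) where
  toFun a := (ψ a).toIntLinearMap
  map_zero' := by ext b; show (ψ 0) b = 0; rw [map_zero]; rfl
  map_add' a a' := by ext b; show (ψ (a + a')) b = ψ a b + ψ a' b; rw [map_add]; rfl

/-- A linear map into a character module induces a character of `RTensor`. -/
noncomputable def toChar (ψ : A →ₗ[Rᵐᵒᵖ] CharacterModule B) :
    CharacterModule (RTensor R A B) :=
  (Submodule.liftQ (trel R A B) (TensorProduct.lift (toCharAux ψ).toIntLinearMap)
    (by
      rw [trel, Submodule.span_le]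
      rintro z ⟨r, a, b, rfl⟩
      simp only [SetLike.mem_coe, LinearMap.mem_ker, map_sub]
      have h1 : TensorProduct.lift (toCharAux ψ).toIntLinearMap
          ((MulOpposite.op r • a) ⊗ₜ[ℤ] b) = ψ (MulOpposite.op r • a) b := rfl
      have h2 : TensorProduct.lift (toCharAux ψ).toIntLinearMap
          (a ⊗ₜ[ℤ] (r • b)) = ψ a (r • b) := rfl
      show TensorProduct.lift (toCharAux ψ).toIntLinearMap
          ((MulOpposite.op r • a) ⊗ₜ[ℤ] b - a ⊗ₜ[ℤ] (r • b)) = 0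
      rw [map_sub, h1, h2, ψ.map_smul, charRight_smul_apply, MulOpposite.unop_op, sub_self])).toAddMonoidHom

lemma toChar_mk (ψ : A →ₗ[Rᵐᵒᵖ] CharacterModule B) (a : A) (b : B) :
    toChar ψ (RTensor.mk R a b) = ψ a b := rfl

/-- A character of `RTensor` induces a linear map into the character module. -/
noncomputable def ofChar (χ : CharacterModule (RTensor R A B)) :
    A →ₗ[Rᵐᵒᵖ] CharacterModule B where
  toFun a := AddMonoidHom.mk' (fun b => χ (RTensor.mk R a b)) (fun b b' => by
    show χ (RTensor.mk R a (b + b')) = χ (RTensor.mk R a b) + χ (RTensor.mk R a b')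
    rw [RTensor.mk_add_right, map_add])
  map_add' a a' := by
    ext b
    show χ (RTensor.mk R (a + a') b) = χ (RTensor.mk R a b) + χ (RTensor.mk R a' b)
    rw [RTensor.mk_add_left, map_add]
  map_smul' r c := by
    ext b
    show χ (RTensor.mk R (r • c) b) = χ (RTensor.mk R c (r.unop • b))
    rw [← RTensor.mk_rel r.unop c b, MulOpposite.op_unop]

lemma ofChar_apply (χ : CharacterModule (RTensor R A B)) (a : A) (b : B) :
    ofChar χ a b = χ (RTensor.mk R a b) := rfl

lemma toChar_ofChar_apply (χ : CharacterModule (RTensor R A B)) (x : RTensor R A B) :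
    toChar (ofChar χ) x = χ x := by
  induction x using RTensor.induction_on with
  | zero => rw [map_zero, map_zero]
  | mk a b => rw [toChar_mk]; rfl
  | add x y hx hy => rw [map_add, map_add, hx, hy]

lemma toChar_lmap (ψ : A' →ₗ[Rᵐᵒᵖ] CharacterModule B) (g : A →ₗ[Rᵐᵒᵖ] A')
    (x : RTensor R A B) :
    toChar ψ (RTensor.lmap R g B x) = toChar (ψ ∘ₗ g) x := by
  induction x using RTensor.induction_on with
  | zero => rw [map_zero, map_zero, map_zero]
  | mk a b => rw [RTensor.lmap_mk, toChar_mk, toChar_mk]; rfl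
  | add x y hx hy => rw [map_add, map_add, map_add, hx, hy]

/-- If the character module of `B` is injective then `B` is flat. -/
lemma flat_of_char_inj (h : InjMod Rᵐᵒᵖ (CharacterModule B)) : FlatModule R B := by
  intro A₀ A₁ _ _ _ _ g hg
  rw [injective_iff_map_eq_zero]
  intro x hx
  refine CharacterModule.eq_zero_of_character_apply (fun χ => ?_)
  obtain ⟨ψ, hψ⟩ := h A₀ A₁ g hg (ofChar χ)
  calc χ x = toChar (ofChar χ) x := (toChar_ofChar_apply χ x).symm
    _ = toChar (ψ ∘ₗ g) x := by rw [hψ]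
    _ = toChar ψ (RTensor.lmap R g B x) := (toChar_lmap ψ g x).symm
    _ = 0 := by rw [hx, map_zero]

/-- If `B` is flat then its character module is injective. -/
lemma char_inj_of_flat (h : FlatModule R B) : InjMod Rᵐᵒᵖ (CharacterModule B) := by
  intro U V _ _ _ _ j hj φ
  have hinj : Function.Injective (RTensor.lmap R j B) := h U V j hj
  obtain ⟨χ', hχ'⟩ := CharacterModule.dual_surjective_of_injective (R := ℤ)
    (RTensor.lmap R j B) hinj (toChar φ)
  refine ⟨ofChar χ', ?_⟩
  ext a b
  show ofChar χ' (j a) b = φ a b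
  rw [ofChar_apply]
  have h1 : χ' (RTensor.mk R (j a) b) = χ' (RTensor.lmap R j B (RTensor.mk R a b)) := by
    rw [RTensor.lmap_mk]
  rw [h1]
  have h2 : χ' (RTensor.lmap R j B (RTensor.mk R a b)) = toChar φ (RTensor.mk R a b) :=
    congrArg (fun c => c (RTensor.mk R a b)) hχ'
  rw [h2, toChar_mk]

end Adjunction

/-! ### Injective module toolbox -/

section InjTools
variable {S : Type u} [Ring S]
variable {X Y Z J J' Y' : Type u}
variable [AddCommGroup X] [Module S X] [AddCommGroup Y] [Module S Y]
variable [AddCommGroup Z] [Module S Z] [AddCommGroup J] [Module S J]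
variable [AddCommGroup J'] [Module S J'] [AddCommGroup Y'] [Module S Y']

lemma InjMod.retract (s : Y →ₗ[S] X) (r : X →ₗ[S] Y) (hrs : r ∘ₗ s = LinearMap.id)
    (h : InjMod S X) : InjMod S Y := by
  intro U V _ _ _ _ j hj φ
  obtain ⟨ψ, hψ⟩ := h U V j hj (s ∘ₗ φ)
  refine ⟨r ∘ₗ ψ, ?_⟩
  rw [LinearMap.comp_assoc, hψ, ← LinearMap.comp_assoc, hrs, LinearMap.id_comp]

lemma InjMod.congr (e : X ≃ₗ[S] Y) (h : InjMod S X) : InjMod S Y :=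
  InjMod.retract (e.symm : Y →ₗ[S] X) (e : X →ₗ[S] Y)
    (by ext y; exact e.apply_symm_apply y) h

lemma InjMod.prod (hX : InjMod S X) (hY : InjMod S Y) : InjMod S (X × Y) := by
  intro U V _ _ _ _ j hj φ
  obtain ⟨ψ₁, hψ₁⟩ := hX U V j hj ((LinearMap.fst S X Y) ∘ₗ φ)
  obtain ⟨ψ₂, hψ₂⟩ := hY U V j hj ((LinearMap.snd S X Y) ∘ₗ φ)
  refine ⟨ψ₁.prod ψ₂, ?_⟩
  ext u
  · exact congrArg (fun f => f u) hψ₁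
  · exact congrArg (fun f => f u) hψ₂

variable {i : X →ₗ[S] J} {p : J →ₗ[S] Y}

lemma IsShortExact.p_comp_i (h : IsShortExact i p) (x : X) : p (i x) = 0 :=
  (h.2.1 (i x)).mpr ⟨x, rfl⟩

/-- A short exact sequence beginning with an injective module admits a retraction. -/
lemma retraction_of_inj (h : IsShortExact i p) (hX : InjMod S X) :
    ∃ π : J →ₗ[S] X, π ∘ₗ i = LinearMap.id :=
  hX X J i h.1 LinearMap.id

/-- A retraction yields a section of the quotient map. -/
lemma section_of_retraction (h : IsShortExact i p) (π : J →ₗ[S] X)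
    (hπ : π ∘ₗ i = LinearMap.id) : ∃ s : Y →ₗ[S] J, p ∘ₗ s = LinearMap.id := by
  set ρ : J →ₗ[S] J := LinearMap.id - i ∘ₗ π with hρ
  have hker : LinearMap.ker p ≤ LinearMap.ker ρ := by
    intro x hx
    have hx0 : p x = 0 := hx
    obtain ⟨w, rfl⟩ := (h.2.1 x).mp hx0
    have : π (i w) = w := congrArg (fun f => f w) hπ
    simp [hρ, this]
  set σ0 := Submodule.liftQ (LinearMap.ker p) ρ hker
  set e := LinearMap.quotKerEquivOfSurjective p h.2.2
  refine ⟨σ0 ∘ₗ (e.symm : Y →ₗ[S] J ⧸ LinearMap.ker p), ?_⟩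
  ext y
  obtain ⟨x, hxy⟩ : ∃ x : J, Submodule.Quotient.mk x = e.symm y := by
    obtain ⟨x, hx⟩ := Submodule.mkQ_surjective (LinearMap.ker p) (e.symm y)
    exact ⟨x, hx⟩
  have hey : e (Submodule.Quotient.mk x) = y := by rw [hxy, LinearEquiv.apply_symm_apply]
  have hpx : p x = y := hey
  show p (σ0 (e.symm y)) = y
  rw [← hxy]
  have : σ0 (Submodule.Quotient.mk x) = ρ x := rfl
  rw [this, hρ]
  simp only [LinearMap.sub_apply, LinearMap.id_apply, LinearMap.comp_apply, map_sub]
  rw [h.p_comp_i (π x), sub_zero, hpx]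

/-- Splitting equivalence for a split short exact sequence. -/
lemma split_equiv (h : IsShortExact i p) (π : J →ₗ[S] X)
    (hπ : π ∘ₗ i = LinearMap.id) : Nonempty (J ≃ₗ[S] X × Y) := by
  refine ⟨LinearEquiv.ofBijective (π.prod p) ⟨?_, ?_⟩⟩
  · intro x y hxy
    have h1 : π x = π y := congrArg Prod.fst hxy
    have h2 : p x = p y := congrArg Prod.snd hxy
    have h3 : p (x - y) = 0 := by rw [map_sub, h2, sub_self]
    obtain ⟨w, hw⟩ := (h.2.1 (x - y)).mp h3
    have h4 : π (x - y) = 0 := by rw [map_sub, h1, sub_self]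
    rw [← hw] at h4
    have h5 : π (i w) = w := congrArg (fun f => f w) hπ
    rw [h5] at h4
    have : x - y = 0 := by rw [← hw, h4, map_zero]
    exact sub_eq_zero.mp this
  · rintro ⟨c, y⟩
    obtain ⟨z, rfl⟩ := h.2.2 y
    refine ⟨z + i (c - π z), ?_⟩
    have hπz : π (i (c - π z)) = c - π z := congrArg (fun f => f (c - π z)) hπ
    have hpz : p (i (c - π z)) = 0 := h.p_comp_i _
    refine Prod.ext ?_ ?_
    · show π (z + i (c - π z)) = c
      rw [map_add, hπz]; abel
    · show p (z + i (c - π z)) = p z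
      rw [map_add, hpz, add_zero]

lemma InjMod.quotient (h : IsShortExact i p) (hX : InjMod S X) (hJ : InjMod S J) :
    InjMod S Y := by
  obtain ⟨π, hπ⟩ := retraction_of_inj h hX
  obtain ⟨s, hs⟩ := section_of_retraction h π hπ
  exact InjMod.retract s p hs hJ

/-- A short exact sequence with quotient map from an injective embedding. -/
lemma shortExact_quot {e : Z →ₗ[S] J} (he : Function.Injective e) :
    IsShortExact e (LinearMap.range e).mkQ := by
  refine ⟨he, ?_, Submodule.mkQ_surjective _⟩
  intro x
  rw [Submodule.mkQ_apply, Submodule.Quotient.mk_eq_zero]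
  exact ⟨fun hx => hx, fun hx => hx⟩

lemma IsShortExact.prodMap {X' : Type u} [AddCommGroup X'] [Module S X']
    {i' : X' →ₗ[S] J'} {p' : J' →ₗ[S] Y'}
    (h : IsShortExact i p) (h' : IsShortExact i' p') :
    IsShortExact (i.prodMap i') (p.prodMap p') := by
  refine ⟨fun x y hxy => ?_, fun z => ?_, fun z => ?_⟩
  · have h1 : i x.1 = i y.1 := congrArg Prod.fst hxy
    have h2 : i' x.2 = i' y.2 := congrArg Prod.snd hxy
    exact Prod.ext (h.1 h1) (h'.1 h2)
  · constructor
    · intro hz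
      have h1 : p z.1 = 0 := congrArg Prod.fst hz
      have h2 : p' z.2 = 0 := congrArg Prod.snd hz
      obtain ⟨w, hw⟩ := (h.2.1 z.1).mp h1
      obtain ⟨w', hw'⟩ := (h'.2.1 z.2).mp h2
      exact ⟨(w, w'), Prod.ext hw hw'⟩
    · rintro ⟨⟨w, w'⟩, rfl⟩
      exact Prod.ext (h.p_comp_i w) (h'.p_comp_i w')
  · obtain ⟨x, hx⟩ := h.2.2 z.1
    obtain ⟨x', hx'⟩ := h'.2.2 z.2
    exact ⟨(x, x'), Prod.ext hx hx'⟩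

lemma IsShortExact.comp_equiv {W : Type u} [AddCommGroup W] [Module S W]
    (h : IsShortExact i p) (e : W ≃ₗ[S] X) :
    IsShortExact (i ∘ₗ (e : W →ₗ[S] X)) p := by
  refine ⟨h.1.comp e.injective, fun x => ?_, h.2.2⟩
  rw [h.2.1 x]
  constructor
  · rintro ⟨w, rfl⟩
    exact ⟨e.symm w, by simp⟩
  · rintro ⟨w, rfl⟩
    exact ⟨e w, rfl⟩

/-- Schanuel's lemma for injective cosyzygies. -/
lemma schanuel {i' : X →ₗ[S] J'} {p' : J' →ₗ[S] Y'}
    (h : IsShortExact i p) (h' : IsShortExact i' p')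
    (hJ : InjMod S J) (hJ' : InjMod S J') :
    Nonempty ((J × Y') ≃ₗ[S] (J' × Y)) := by
  classical
  set T : Submodule S (J × J') := LinearMap.range (i.prod (-i')) with hT
  set P := (J × J') ⧸ T
  set α : J →ₗ[S] P := T.mkQ ∘ₗ LinearMap.inl S J J' with hα
  set β : J' →ₗ[S] P := T.mkQ ∘ₗ LinearMap.inr S J J' with hβ
  set q : P →ₗ[S] Y' := Submodule.liftQ T (p' ∘ₗ LinearMap.snd S J J') (by
    rintro z ⟨w, rfl⟩
    show p' ((i.prod (-i')) w).2 = 0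
    have : ((i.prod (-i')) w).2 = -(i' w) := rfl
    rw [this, map_neg, h'.p_comp_i, neg_zero]) with hq
  set q2 : P →ₗ[S] Y := Submodule.liftQ T (p ∘ₗ LinearMap.fst S J J') (by
    rintro z ⟨w, rfl⟩
    show p ((i.prod (-i')) w).1 = 0
    exact h.p_comp_i w) with hq2
  have hse1 : IsShortExact α q := by
    refine ⟨?_, ?_, ?_⟩
    · intro x y hxy
      rw [hα] at hxy
      have : Submodule.Quotient.mk (p := T) ((x, 0) - (y, 0)) = 0 := by
        rw [Submodule.Quotient.mk_sub]
        rw [sub_eq_zero]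
        exact hxy
      rw [Submodule.Quotient.mk_eq_zero] at this
      obtain ⟨w, hw⟩ := this
      have h2 : -(i' w) = (0 : J') - 0 := congrArg Prod.snd hw
      have h2' : i' w = 0 := by rwa [sub_zero, neg_eq_zero] at h2
      have hw0 : w = 0 := h'.1 (by rw [h2']; exact (map_zero i').symm)
      have h1 : i w = x - y := congrArg Prod.fst hw
      rw [hw0, map_zero] at h1
      exact sub_eq_zero.mp h1.symm
    · intro z
      obtain ⟨⟨j, j'⟩, rfl⟩ := Submodule.mkQ_surjective T z
      constructor
      · intro hz
        have hpj' : p' j' = 0 := hz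
        obtain ⟨w, hw⟩ := (h'.2.1 j').mp hpj'
        refine ⟨j + i w, ?_⟩
        show Submodule.Quotient.mk ((j + i w, 0)) = Submodule.Quotient.mk ((j, j'))
        rw [Submodule.Quotient.eq]
        refine ⟨w, ?_⟩
        show ((i w, -(i' w)) : J × J') = (j + i w, 0) - (j, j')
        rw [hw]
        exact Prod.ext (by show i w = j + i w - j; abel) (by show -j' = 0 - j'; abel)
      · rintro ⟨x, hx⟩
        rw [← hx]
        show p' ((x, 0) : J × J').2 = 0
        exact map_zero p'
    · intro y'
      obtain ⟨j', hj'⟩ := h'.2.2 y'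
      exact ⟨Submodule.Quotient.mk ((0, j')), hj'⟩
  have hse2 : IsShortExact β q2 := by
    refine ⟨?_, ?_, ?_⟩
    · intro x y hxy
      have : Submodule.Quotient.mk (p := T) ((0, x) - (0, y)) = 0 := by
        rw [Submodule.Quotient.mk_sub, sub_eq_zero]
        exact hxy
      rw [Submodule.Quotient.mk_eq_zero] at this
      obtain ⟨w, hw⟩ := this
      have h1 : i w = (0 : J) - 0 := congrArg Prod.fst hw
      have h1' : i w = 0 := by rwa [sub_zero] at h1
      have hw0 : w = 0 := h.1 (by rw [h1']; exact (map_zero i).symm)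
      have h2 : -(i' w) = x - y := congrArg Prod.snd hw
      rw [hw0, map_zero, neg_zero] at h2
      exact sub_eq_zero.mp h2.symm
    · intro z
      obtain ⟨⟨j, j'⟩, rfl⟩ := Submodule.mkQ_surjective T z
      constructor
      · intro hz
        have hpj : p j = 0 := hz
        obtain ⟨w, hw⟩ := (h.2.1 j).mp hpj
        refine ⟨j' + i' w, ?_⟩
        show Submodule.Quotient.mk ((0, j' + i' w)) = Submodule.Quotient.mk ((j, j'))
        rw [Submodule.Quotient.eq]
        refine ⟨-w, ?_⟩
        show ((i (-w), -(i' (-w))) : J × J') = (0, j' + i' w) - (j, j')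
        rw [map_neg, map_neg, neg_neg, hw]
        exact Prod.ext (by show -j = 0 - j; abel) (by show i' w = j' + i' w - j'; abel)
      · rintro ⟨x, hx⟩
        rw [← hx]
        show p ((0, x) : J × J').1 = 0
        exact map_zero p
    · intro y
      obtain ⟨j, hj⟩ := h.2.2 y
      exact ⟨Submodule.Quotient.mk ((j, 0)), hj⟩
  obtain ⟨π1, hπ1⟩ := retraction_of_inj hse1 hJ
  obtain ⟨e1⟩ := split_equiv hse1 π1 hπ1
  obtain ⟨π2, hπ2⟩ := retraction_of_inj hse2 hJ'
  obtain ⟨e2⟩ := split_equiv hse2 π2 hπ2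
  exact ⟨e1.symm.trans e2⟩

end InjTools


/-! ### The dimension-shifted injectivity predicate -/

/-- `E S k X` says that every `k`-fold injective cosyzygy of `X` is injective
(`Ext^{k+1}(-, X) = 0` and beyond). -/
def E (S : Type u) [Ring S] : ℕ → ∀ (X : Type u) [AddCommGroup X] [Module S X], Prop :=
  fun k => Nat.rec (motive := fun _ => ∀ (X : Type u) [AddCommGroup X] [Module S X], Prop)
    (fun X _ _ => InjMod S X)
    (fun _ ih X _ _ =>
      ∀ (J Y : Type u) [AddCommGroup J] [Module S J] [AddCommGroup Y] [Module S Y]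
        (i : X →ₗ[S] J) (p : J →ₗ[S] Y), InjMod S J → IsShortExact i p → ih Y) k

lemma E_zero {S : Type u} [Ring S] {X : Type u} [AddCommGroup X] [Module S X] :
    E S 0 X ↔ InjMod S X := Iff.rfl

lemma E_succ {S : Type u} [Ring S] {X : Type u} [AddCommGroup X] [Module S X] {k : ℕ} :
    E S (k + 1) X ↔
      ∀ (J Y : Type u) [AddCommGroup J] [Module S J] [AddCommGroup Y] [Module S Y]
        (i : X →ₗ[S] J) (p : J →ₗ[S] Y), InjMod S J → IsShortExact i p → E S k Y := Iff.rfl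

/-- A bundled embedding into an injective module. -/
structure InjEmb (S : Type u) [Ring S] (Z : Type u) [AddCommGroup Z] [Module S Z] where
  J : Type u
  [acg : AddCommGroup J]
  [mod : Module S J]
  e : Z →ₗ[S] J
  inj : InjMod S J
  emb : Function.Injective e

attribute [instance] InjEmb.acg InjEmb.mod

/-- `S` has enough injectives (within universe `u`). -/
def EnoughInj (S : Type u) [Ring S] : Prop :=
  ∀ (Z : Type u) [AddCommGroup Z] [Module S Z], Nonempty (InjEmb S Z)

section ETools
variable {S : Type u} [Ring S]

theorem E_closure (hEI : EnoughInj S) : ∀ k : ℕ,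
    (∀ (X : Type u) [AddCommGroup X] [Module S X], InjMod S X → E S k X) ∧
    (∀ (X Y : Type u) [AddCommGroup X] [Module S X] [AddCommGroup Y] [Module S Y]
      (s : Y →ₗ[S] X) (r : X →ₗ[S] Y), r ∘ₗ s = LinearMap.id → E S k X → E S k Y) ∧
    (∀ (X Y : Type u) [AddCommGroup X] [Module S X] [AddCommGroup Y] [Module S Y],
      E S k X → E S k Y → E S k (X × Y)) := by
  intro k
  induction k with
  | zero =>
      refine ⟨fun X _ _ hX => hX, fun X Y _ _ _ _ s r hrs hX => InjMod.retract s r hrs hX,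
        fun X Y _ _ _ _ hX hY => InjMod.prod hX hY⟩
  | succ k ih =>
      obtain ⟨ihI, ihR, ihP⟩ := ih
      have hI : ∀ (X : Type u) [AddCommGroup X] [Module S X], InjMod S X → E S (k + 1) X := by
        intro X _ _ hX
        rw [E_succ]
        intro J Y _ _ _ _ i p hJ hse
        exact ihI Y (InjMod.quotient hse hX hJ)
      refine ⟨hI, ?_, ?_⟩
      · -- retract closure
        intro X Y _ _ _ _ s r hrs hX
        rw [E_succ]
        intro J Y₁ _ _ _ _ i p hJ hse
        -- X ≃ Y × ker r
        have hkr : ∀ x : X, r (x - s (r x)) = 0 := by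
          intro x
          have : r (s (r x)) = r x := congrArg (fun f => f (r x)) hrs
          rw [map_sub, this, sub_self]
        let eYW : X ≃ₗ[S] Y × (LinearMap.ker r) :=
          { toFun := fun x => (r x, ⟨x - s (r x), hkr x⟩)
            map_add' := fun x y => by
              refine Prod.ext (by simp) (Subtype.ext ?_)
              show (x + y) - s (r (x + y)) = (x - s (r x)) + (y - s (r y))
              rw [map_add, map_add]; abel
            map_smul' := fun c x => by
              refine Prod.ext (by simp) (Subtype.ext ?_)
              show (c • x) - s (r (c • x)) = c • (x - s (r x))
              rw [map_smul, map_smul, smul_sub]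
            invFun := fun z => s z.1 + z.2.1
            left_inv := fun x => by
              show s (r x) + (x - s (r x)) = x
              abel
            right_inv := fun z => by
              have hz2 : r z.2.1 = 0 := z.2.2
              have h1 : r (s z.1 + z.2.1) = z.1 := by
                have : r (s z.1) = z.1 := congrArg (fun f => f z.1) hrs
                rw [map_add, this, hz2, add_zero]
              refine Prod.ext h1 (Subtype.ext ?_)
              show (s z.1 + z.2.1) - s (r (s z.1 + z.2.1)) = z.2.1
              rw [h1]; abel }
        obtain ⟨M⟩ := hEI (LinearMap.ker r)
        -- cosyzygy of X : J × M.J with quotient Y₁ × (M.J / range M.e)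
        have hseW : IsShortExact M.e (LinearMap.range M.e).mkQ := shortExact_quot M.emb
        have hseP : IsShortExact (i.prodMap M.e) (p.prodMap (LinearMap.range M.e).mkQ) :=
          IsShortExact.prodMap hse hseW
        have hseX : IsShortExact ((i.prodMap M.e) ∘ₗ (eYW : X →ₗ[S] Y × LinearMap.ker r))
            (p.prodMap (LinearMap.range M.e).mkQ) := IsShortExact.comp_equiv hseP eYW
        have hEk : E S k (Y₁ × (M.J ⧸ LinearMap.range M.e)) :=
          hX (J × M.J) (Y₁ × (M.J ⧸ LinearMap.range M.e))
            ((i.prodMap M.e) ∘ₗ (eYW : X →ₗ[S] Y × LinearMap.ker r))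
            (p.prodMap (LinearMap.range M.e).mkQ)
            (InjMod.prod hJ M.inj) hseX
        exact ihR _ _ (LinearMap.inl S Y₁ _) (LinearMap.fst S Y₁ _) (by ext y; rfl) hEk
      · -- product closure
        intro X Y _ _ _ _ hX hY
        rw [E_succ]
        intro J Z _ _ _ _ i p hJ hse
        obtain ⟨MX⟩ := hEI X
        obtain ⟨MY⟩ := hEI Y
        have hseX : IsShortExact MX.e (LinearMap.range MX.e).mkQ := shortExact_quot MX.emb
        have hseY : IsShortExact MY.e (LinearMap.range MY.e).mkQ := shortExact_quot MY.emb
        have hEX : E S k (MX.J ⧸ LinearMap.range MX.e) :=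
          hX MX.J (MX.J ⧸ LinearMap.range MX.e) MX.e (LinearMap.range MX.e).mkQ MX.inj hseX
        have hEY : E S k (MY.J ⧸ LinearMap.range MY.e) :=
          hY MY.J (MY.J ⧸ LinearMap.range MY.e) MY.e (LinearMap.range MY.e).mkQ MY.inj hseY
        have hseProd : IsShortExact (MX.e.prodMap MY.e)
            ((LinearMap.range MX.e).mkQ.prodMap (LinearMap.range MY.e).mkQ) :=
          IsShortExact.prodMap hseX hseY
        obtain ⟨eq⟩ := schanuel hse hseProd hJ (InjMod.prod MX.inj MY.inj)
        -- eq : J × (QX × QY) ≃ (MX.J × MY.J) × Z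
        have h1 : E S k (J × ((MX.J ⧸ LinearMap.range MX.e) × (MY.J ⧸ LinearMap.range MY.e))) :=
          ihP _ _ (ihI _ hJ) (ihP _ _ hEX hEY)
        have h2 : E S k ((MX.J × MY.J) × Z) :=
          ihR _ _ (eq.symm : _ →ₗ[S] _) (eq : _ →ₗ[S] _)
            (by refine LinearMap.ext fun x => ?_; simp) h1
        exact ihR _ _ (LinearMap.inr S (MX.J × MY.J) Z) (LinearMap.snd S (MX.J × MY.J) Z)
          (by ext z; rfl) h2

/-- If some injective cosyzygy of `X` satisfies `E k`, then `X` satisfies `E (k+1)`. -/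
lemma E_succ_of_cosyzygy (hEI : EnoughInj S) {X J₀ Y₀ : Type u} [AddCommGroup X] [Module S X]
    [AddCommGroup J₀] [Module S J₀] [AddCommGroup Y₀] [Module S Y₀] {k : ℕ}
    (i₀ : X →ₗ[S] J₀) (p₀ : J₀ →ₗ[S] Y₀) (hJ₀ : InjMod S J₀) (hse₀ : IsShortExact i₀ p₀)
    (hY₀ : E S k Y₀) : E S (k + 1) X := by
  obtain ⟨ihI, ihR, ihP⟩ := E_closure hEI k
  rw [E_succ]
  intro J Y _ _ _ _ i p hJ hse
  obtain ⟨eq⟩ := schanuel hse₀ hse hJ₀ hJ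
  -- eq : J₀ × Y ≃ J × Y₀
  have h1 : E S k (J × Y₀) := ihP _ _ (ihI _ hJ) hY₀
  have h2 : E S k (J₀ × Y) :=
    ihR _ _ (eq : _ →ₗ[S] _) (eq.symm : _ →ₗ[S] _)
      (by refine LinearMap.ext fun x => ?_; simp) h1
  exact ihR _ _ (LinearMap.inr S J₀ Y) (LinearMap.snd S J₀ Y) (by ext z; rfl) h2

end ETools

/-! ### Flat dimension and dualization -/

section Assembly
variable {R : Type u} [Ring R]

lemma flat_congr {B B' : Type u} [AddCommGroup B] [Module R B] [AddCommGroup B'] [Module R B']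
    (e : B ≃ₗ[R] B') (h : FlatModule R B) : FlatModule R B' := by
  intro A A' _ _ _ _ g hg
  have inv1 : ∀ (A₀ : Type u) [AddCommGroup A₀] [Module Rᵐᵒᵖ A₀] (x : RTensor R A₀ B'),
      RTensor.map R A₀ (e : B →ₗ[R] B') (RTensor.map R A₀ (e.symm : B' →ₗ[R] B) x) = x := by
    intro A₀ _ _ x
    induction x using RTensor.induction_on with
    | zero => rw [map_zero, map_zero]
    | mk a b => rw [RTensor.map_mk, RTensor.map_mk]
                exact congrArg (RTensor.mk R a) (e.apply_symm_apply b)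
    | add x y hx hy => rw [map_add, map_add, hx, hy]
  have inv2 : ∀ (A₀ : Type u) [AddCommGroup A₀] [Module Rᵐᵒᵖ A₀] (x : RTensor R A₀ B),
      RTensor.map R A₀ (e.symm : B' →ₗ[R] B) (RTensor.map R A₀ (e : B →ₗ[R] B') x) = x := by
    intro A₀ _ _ x
    induction x using RTensor.induction_on with
    | zero => rw [map_zero, map_zero]
    | mk a b => rw [RTensor.map_mk, RTensor.map_mk]
                exact congrArg (RTensor.mk R a) (e.symm_apply_apply b)
    | add x y hx hy => rw [map_add, map_add, hx, hy]
  have key : ∀ x : RTensor R A B', RTensor.lmap R g B' x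
      = RTensor.map R A' (e : B →ₗ[R] B')
          (RTensor.lmap R g B (RTensor.map R A (e.symm : B' →ₗ[R] B) x)) := by
    intro x
    induction x using RTensor.induction_on with
    | zero => rw [map_zero, map_zero, map_zero, map_zero]
    | mk a b => rw [RTensor.lmap_mk, RTensor.map_mk, RTensor.lmap_mk, RTensor.map_mk]
                exact (congrArg (RTensor.mk R (g a)) (e.apply_symm_apply b)).symm
    | add x y hx hy => rw [map_add, map_add, map_add, map_add, hx, hy]
  rw [injective_iff_map_eq_zero]
  intro x hx
  rw [key x] at hx
  have h2 : RTensor.lmap R g B (RTensor.map R A (e.symm : B' →ₗ[R] B) x) = 0 := by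
    have h2' := congrArg (RTensor.map R A' (e.symm : B' →ₗ[R] B)) hx
    rw [map_zero, inv2 A'] at h2'
    exact h2'
  have h3 : RTensor.map R A (e.symm : B' →ₗ[R] B) x = 0 :=
    h A A' g hg (by rw [h2, map_zero])
  have h4 := congrArg (RTensor.map R A (e : B →ₗ[R] B')) h3
  rw [map_zero, inv1 A x] at h4
  exact h4

lemma fdle_zero_flat {N : Type u} [AddCommGroup N] [Module R N] (h : FdLE R N 0) :
    FlatModule R N := by
  obtain ⟨res, hres⟩ := h
  have hflat : FlatModule R (res.G 0) := hres 0 le_rfl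
  have hinj : Function.Injective res.aug := by
    rw [injective_iff_map_eq_zero]
    intro x hx
    obtain ⟨y, hy⟩ := (res.exact0 x).mp hx
    rw [← hy, res.zero 1 one_pos y, map_zero]
  exact flat_congr (LinearEquiv.ofBijective res.aug ⟨hinj, res.surj⟩) hflat

/-- Dualizing a length-`k` flat resolution gives `E k` for the character module. -/
lemma R2E (hEI : EnoughInj Rᵐᵒᵖ) :
    ∀ (k : ℕ) (N : Type u) [AddCommGroup N] [Module R N],
      FdLE R N k → E Rᵐᵒᵖ k (CharacterModule N) := by
  intro k
  induction k with
  | zero =>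
      intro N _ _ h
      exact E_zero.mpr (char_inj_of_flat (fdle_zero_flat h))
  | succ k ih =>
      intro N _ _ h
      obtain ⟨res, hres⟩ := h
      have hN₁ : FdLE R (↥(LinearMap.range (res.d 0))) k := by
        refine ⟨{ G := fun i => res.G (i + 1)
                  d := fun i => res.d (i + 1)
                  aug := (res.d 0).rangeRestrict
                  surj := LinearMap.surjective_rangeRestrict _
                  exact0 := ?_
                  exact := fun i => res.exact (i + 1)
                  zero := fun i hi x => res.zero (i + 1) (by omega) x }, ?_⟩
        · intro y
          constructor
          · intro hy
            have hy0 : res.d 0 y = 0 := by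
              have := Subtype.ext_iff.mp hy
              exact this
            exact (res.exact 0 y).mp hy0
          · intro hy
            exact Subtype.ext ((res.exact 0 y).mpr hy)
        · intro i hi
          exact hres (i + 1) (by omega)
      have hEk : E Rᵐᵒᵖ k (CharacterModule ↥(LinearMap.range (res.d 0))) := ih _ hN₁
      have hse : IsShortExact (LinearMap.range (res.d 0)).subtype res.aug := by
        refine ⟨Submodule.injective_subtype _, ?_, res.surj⟩
        intro y
        rw [res.exact0 y]
        constructor
        · rintro ⟨x, hx⟩
          exact ⟨⟨y, ⟨x, hx⟩⟩, rfl⟩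
        · rintro ⟨⟨y', hy'⟩, rfl⟩
          exact hy'
      have hdual := cdualR_shortExact hse
      exact E_succ_of_cosyzygy hEI (cdualR res.aug)
        (cdualR (LinearMap.range (res.d 0)).subtype)
        (char_inj_of_flat (hres 0 (Nat.zero_le _))) hdual hEk

/-- Evaluation into the double character module. -/
noncomputable def evChar (Z : Type u) [AddCommGroup Z] [Module Rᵐᵒᵖ Z] :
    Z →ₗ[Rᵐᵒᵖ] CharacterModule (CharacterModule Z) where
  toFun z := AddMonoidHom.mk' (fun c => c z) (fun c c' => rfl)
  map_add' z z' := by ext c; exact map_add c z z'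
  map_smul' r z := by ext c; rfl

lemma evChar_injective (Z : Type u) [AddCommGroup Z] [Module Rᵐᵒᵖ Z] :
    Function.Injective (evChar (R := R) Z) := by
  rw [injective_iff_map_eq_zero]
  intro z hz
  refine CharacterModule.eq_zero_of_character_apply (fun c => ?_)
  exact congrArg (fun f => f c) hz

lemma enoughInj_op {n : ℕ} (hw : WdimLE R n) : EnoughInj Rᵐᵒᵖ := by
  intro Z _ _
  obtain ⟨res, hres⟩ := hw.1 (CharacterModule Z)
  refine ⟨{ J := CharacterModule (res.G 0)
            e := (cdualR res.aug) ∘ₗ evChar Z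
            inj := char_inj_of_flat (hres 0 (Nat.zero_le _))
            emb := ?_ }⟩
  exact (cdualR_injective_of_surjective res.surj).comp (evChar_injective Z)

attribute [local instance] GorensteinFlatWitness.acg GorensteinFlatWitness.mod

/-- Gorenstein flat modules over a ring of finite weak dimension are flat. -/
lemma gf_flat {n : ℕ} (hw : WdimLE R n) {M : Type u} [AddCommGroup M] [Module R M]
    (hM : IsGorensteinFlat R M) : FlatModule R M := by
  obtain ⟨W⟩ := hM
  have hEI : EnoughInj Rᵐᵒᵖ := enoughInj_op hw
  have hse : ∀ i : ℤ, IsShortExact (LinearMap.range (W.d i)).subtype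
      ((W.d (i + 1)).rangeRestrict) := by
    intro i
    refine ⟨Submodule.injective_subtype _, ?_, LinearMap.surjective_rangeRestrict _⟩
    intro y
    constructor
    · intro hy
      have hy0 : W.d (i + 1) y = 0 := Subtype.ext_iff.mp hy
      obtain ⟨x, hx⟩ := (W.exact i y).mp hy0
      exact ⟨⟨y, ⟨x, hx⟩⟩, rfl⟩
    · rintro ⟨⟨y', hy'⟩, rfl⟩
      exact Subtype.ext ((W.exact i y').mpr hy')
  have hstart : E Rᵐᵒᵖ n (CharacterModule ↥(LinearMap.range (W.d (n : ℤ)))) :=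
    R2E hEI n _ (hw.1 _)
  have walk : ∀ (k : ℕ) (i j : ℤ), j = i + k →
      E Rᵐᵒᵖ k (CharacterModule ↥(LinearMap.range (W.d j))) →
      InjMod Rᵐᵒᵖ (CharacterModule ↥(LinearMap.range (W.d i))) := by
    intro k
    induction k with
    | zero =>
        intro i j hij h
        have hij' : j = i := by simpa using hij
        subst hij'
        exact E_zero.mp h
    | succ k ih =>
        intro i j hij h
        obtain ⟨i', rfl⟩ : ∃ i', j = i' + 1 := ⟨j - 1, by omega⟩
        have hd := cdualR_shortExact (hse i')
        have hEk : E Rᵐᵒᵖ k (CharacterModule ↥(LinearMap.range (W.d i'))) :=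
          h _ _ (cdualR ((W.d (i' + 1)).rangeRestrict))
            (cdualR (LinearMap.range (W.d i')).subtype)
            (char_inj_of_flat (W.flat (i' + 1))) hd
        refine ih i i' (by push_cast at hij ⊢; omega) hEk
  have hInj : InjMod Rᵐᵒᵖ (CharacterModule ↥(LinearMap.range (W.d 0))) :=
    walk n 0 (n : ℤ) (by simp) hstart
  exact flat_of_char_inj (InjMod.congr (cdualREquiv W.iso) hInj)

/-- Extensions of flat modules are flat. -/
lemma flat_extension {A B C : Type u} [AddCommGroup A] [Module R A] [AddCommGroup B]
    [Module R B] [AddCommGroup C] [Module R C] (f : A →ₗ[R] B) (g : B →ₗ[R] C)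
    (h : IsShortExact f g) (hA : FlatModule R A) (hC : FlatModule R C) : FlatModule R B := by
  have hd := cdualR_shortExact h
  have hiC : InjMod Rᵐᵒᵖ (CharacterModule C) := char_inj_of_flat hC
  have hiA : InjMod Rᵐᵒᵖ (CharacterModule A) := char_inj_of_flat hA
  obtain ⟨π, hπ⟩ := retraction_of_inj hd hiC
  obtain ⟨e⟩ := split_equiv hd π hπ
  exact flat_of_char_inj (InjMod.congr e.symm (InjMod.prod hiC hiA))

/-- Flat modules are Gorenstein flat. -/
lemma gf_of_flat {B : Type u} [AddCommGroup B] [Module R B] (hB : FlatModule R B) :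
    IsGorensteinFlat R B := by
  classical
  refine ⟨{ F := fun _ => B
            d := fun i => if i % 2 = 0 then LinearMap.id else (0 : B →ₗ[R] B)
            flat := fun _ => hB
            exact := ?_
            iso := ?_
            tensorExact := ?_ }⟩
  · intro i
    by_cases hi : i % 2 = 0
    · simp only [if_pos hi, if_neg (show ¬ (i + 1) % 2 = 0 by omega)]
      intro y
      constructor
      · intro _; exact ⟨y, rfl⟩
      · intro _; rfl
    · simp only [if_neg hi, if_pos (show (i + 1) % 2 = 0 by omega)]
      intro y
      constructor
      · intro hy
        exact ⟨0, by rw [map_zero]; exact (show y = 0 from hy).symm⟩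
      · rintro ⟨x, rfl⟩
        rfl
  · have h0 : (fun i : ℤ => if i % 2 = 0 then (LinearMap.id : B →ₗ[R] B) else 0) 0
        = LinearMap.id := if_pos (by decide)
    rw [show (if (0:ℤ) % 2 = 0 then (LinearMap.id : B →ₗ[R] B) else 0) = LinearMap.id from h0]
    exact Submodule.topEquiv.symm.trans
      (LinearEquiv.ofEq ⊤ (LinearMap.range LinearMap.id) LinearMap.range_id.symm)
  · intro I _ _ _ i
    by_cases hi : i % 2 = 0
    · simp only [if_pos hi, if_neg (show ¬ (i + 1) % 2 = 0 by omega)]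
      intro y
      constructor
      · intro _
        exact ⟨y, RTensor.map_id_apply y⟩
      · intro _
        exact RTensor.map_zero_apply y
    · simp only [if_neg hi, if_pos (show (i + 1) % 2 = 0 by omega)]
      intro y
      constructor
      · intro hy
        have hy0 : y = 0 := by rwa [RTensor.map_id_apply] at hy
        exact ⟨0, by rw [RTensor.map_zero_apply]; exact hy0.symm⟩
      · rintro ⟨x, rfl⟩
        rw [RTensor.map_id_apply]
        exact RTensor.map_zero_apply x

end Assembly

end Dev
/-- Every ring of finite weak dimension is left GF-closed. -/
theorem leftGFClosed_of_wdim_le (R : Type u) [Ring R] (n : ℕ) (hw : WdimLE R n)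
    (A B C : Type u) [AddCommGroup A] [Module R A] [AddCommGroup B] [Module R B]
    [AddCommGroup C] [Module R C] (f : A →ₗ[R] B) (g : B →ₗ[R] C)
    (h : IsShortExact f g) (hA : IsGorensteinFlat R A) (hC : IsGorensteinFlat R C) :
    IsGorensteinFlat R B := by
  have flatA : FlatModule R A := gf_flat hw hA
  have flatC : FlatModule R C := gf_flat hw hC
  exact gf_of_flat (flat_extension f g h flatA flatC)
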